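/- Let k = 2^s and let φ: {0,1}^s → [k] be the binary expansion bijection φ(x) = 1 + Σ_{i=1}^s x_i 2^{i-1}. Let F: [k] → {0,1} and suppose there are exactly m indices b ∈ [k-1] with F(b) ≠ F(b+1). Then the number of pairs (z,i) ∈ [k] × [s] such that the i-th binary digit of z-1 is 0 and F(z) ≠ F(z + 2^{i-1}) is at most (k-1)·m. -/

import Mathlib

/-- If `F` differs at `a` and `a+n`, there is a boundary in `[a, a+n)`. -/
lemma exists_boundary (F : ℕ → Bool) :
    ∀ n a : ℕ, F a ≠ F (a + n) → ∃ b, a ≤ b ∧ b < a + n ∧ F b ≠ F (b + 1) := by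
  intro n
  induction n with
  | zero => intro a h; simp at h
  | succ n ih =>
    intro a h
    by_cases hc : F (a + n) = F (a + n + 1)
    · have h' : F a ≠ F (a + n) := fun he =>
        h (he.trans (hc.trans (congrArg F (by omega))))
      obtain ⟨b, hb1, hb2, hb3⟩ := ih a h'
      exact ⟨b, hb1, by omega, hb3⟩
    · exact ⟨a + n, Nat.le_add_right _ _, by omega, by simpa [add_assoc] using hc⟩

/-- If bit `j` of `n` is zero and `n < 2^s` with `j < s`, then `n + 2^j < 2^s`. -/
lemma add_pow_lt_of_testBit_false {n j s : ℕ} (hj : j < s) (hb : n.testBit j = false)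
    (hn : n < 2 ^ s) : n + 2 ^ j < 2 ^ s := by
  have h1 : n / 2 ^ j % 2 = 0 := by
    have := Nat.testBit_eq_decide_div_mod_eq (i := j) (x := n)
    rw [hb] at this
    have := of_decide_eq_false this.symm
    omega
  set q := n / 2 ^ j with hq
  have hdm : q * 2 ^ j + n % 2 ^ j = n := by
    rw [hq, Nat.mul_comm]; exact Nat.div_add_mod n (2 ^ j)
  have hml : n % 2 ^ j < 2 ^ j := Nat.mod_lt n (Nat.two_pow_pos j)
  have h2 : q * 2 ^ j ≤ n := by omega
  have h3 : n < (q + 1) * 2 ^ j := by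
    have : (q + 1) * 2 ^ j = q * 2 ^ j + 2 ^ j := by ring
    omega
  have hq2 : q < 2 ^ (s - j) := by
    rw [hq, Nat.div_lt_iff_lt_mul (Nat.two_pow_pos j)]
    calc n < 2 ^ s := hn
    _ = 2 ^ (s - j) * 2 ^ j := by rw [← pow_add]; congr 1; omega
  have heven : 2 ∣ 2 ^ (s - j) := dvd_pow_self 2 (by omega : s - j ≠ 0)
  have hq3 : q + 2 ≤ 2 ^ (s - j) := by omega
  calc n + 2 ^ j < (q + 1) * 2 ^ j + 2 ^ j := by omega
  _ = (q + 2) * 2 ^ j := by ring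
  _ ≤ 2 ^ (s - j) * 2 ^ j := Nat.mul_le_mul_right _ hq3
  _ = 2 ^ s := by rw [← pow_add]; congr 1; omega

/-- For `k = 2^s`, if `F : [k] → {0,1}` has exactly `m` boundary points
`b ∈ [k-1]` with `F b ≠ F (b+1)`, then the number of pairs `(z,i) ∈ [k] × [s]` with the
`i`-th binary digit of `z-1` equal to `0` and `F z ≠ F (z + 2^(i-1))` is at most `(k-1)·m`. -/
theorem stmt0 (s k : ℕ) (hs : 0 < s) (hk : k = 2 ^ s) (F : ℕ → Bool) (m : ℕ)
    (hm : ((Finset.Icc 1 (k - 1)).filter (fun b => F b ≠ F (b + 1))).card = m) :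
    (((Finset.Icc 1 k ×ˢ Finset.Icc 1 s)).filter
      (fun p => (p.1 - 1).testBit (p.2 - 1) = false ∧ F p.1 ≠ F (p.1 + 2 ^ (p.2 - 1)))).card
      ≤ (k - 1) * m := by
  classical
  set B := (Finset.Icc 1 (k - 1)).filter (fun b => F b ≠ F (b + 1)) with hB
  -- g z = least boundary ≥ z
  set g : ℕ → ℕ := fun z => sInf {b | z ≤ b ∧ F b ≠ F (b + 1)} with hg
  set S := (((Finset.Icc 1 k ×ˢ Finset.Icc 1 s)).filter
      (fun p => (p.1 - 1).testBit (p.2 - 1) = false ∧ F p.1 ≠ F (p.1 + 2 ^ (p.2 - 1)))) with hS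
  -- key facts about members of S
  have key : ∀ p ∈ S, (1 ≤ p.1 ∧ p.1 ≤ k ∧ 1 ≤ p.2 ∧ p.2 ≤ s) ∧
      (p.1 ≤ g p.1 ∧ g p.1 < p.1 + 2 ^ (p.2 - 1) ∧ F (g p.1) ≠ F (g p.1 + 1) ∧
        p.1 + 2 ^ (p.2 - 1) ≤ k) := by
    intro p hp
    rw [hS, Finset.mem_filter, Finset.mem_product, Finset.mem_Icc, Finset.mem_Icc] at hp
    obtain ⟨⟨⟨hz1, hz2⟩, hi1, hi2⟩, htb, hF⟩ := hp
    obtain ⟨b₀, hb1, hb2, hb3⟩ := exists_boundary F (2 ^ (p.2 - 1)) p.1 hF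
    have hne : b₀ ∈ {b | p.1 ≤ b ∧ F b ≠ F (b + 1)} := ⟨hb1, hb3⟩
    have hmem : p.1 ≤ g p.1 ∧ F (g p.1) ≠ F (g p.1 + 1) :=
      Nat.sInf_mem (⟨b₀, hne⟩ : {b | p.1 ≤ b ∧ F b ≠ F (b + 1)}.Nonempty)
    have hle : g p.1 ≤ b₀ := Nat.sInf_le hne
    have hbound : p.1 + 2 ^ (p.2 - 1) ≤ k := by
      have := add_pow_lt_of_testBit_false (n := p.1 - 1) (j := p.2 - 1) (s := s)
        (by omega) htb (by omega)
      omega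
    exact ⟨⟨hz1, hz2, hi1, hi2⟩, hmem.1, by omega, hmem.2, hbound⟩
  have hinj : S.card ≤ (B ×ˢ Finset.range (k - 1)).card := by
    apply Finset.card_le_card_of_injOn
      (fun p => (g p.1, 2 ^ (p.2 - 1) - 1 + (g p.1 - p.1)))
    · intro p hp
      obtain ⟨⟨hz1, hz2, hi1, hi2⟩, hgz, hglt, hgF, hbd⟩ := key p hp
      dsimp only
      rw [Finset.mem_coe, Finset.mem_product, hB, Finset.mem_filter, Finset.mem_Icc, Finset.mem_range]
      have hpow : 2 ^ (p.2 - 1) ≤ 2 ^ (s - 1) := Nat.pow_le_pow_right (by norm_num) (by omega)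
      have hks : 2 * 2 ^ (s - 1) = k := by
        rw [hk, ← pow_succ']; congr 1; omega
      refine ⟨⟨⟨by omega, by omega⟩, hgF⟩, ?_⟩
      have h1 : (1:ℕ) ≤ 2 ^ (p.2 - 1) := Nat.one_le_two_pow
      omega
    · intro p hp q hq hfe
      obtain ⟨⟨hpz1, _, hpi1, hpi2⟩, hpg, hpglt, _, _⟩ := key p hp
      obtain ⟨⟨hqz1, _, hqi1, hqi2⟩, hqg, hqglt, _, _⟩ := key q hq
      simp only [Prod.mk.injEq] at hfe
      obtain ⟨hb, hv⟩ := hfe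
      have h1p : (1:ℕ) ≤ 2 ^ (p.2 - 1) := Nat.one_le_two_pow
      have h1q : (1:ℕ) ≤ 2 ^ (q.2 - 1) := Nat.one_le_two_pow
      -- recover the exponent by Nat.log
      have hi : p.2 = q.2 := by
        have hlp : Nat.log 2 (2 ^ (p.2 - 1) - 1 + (g p.1 - p.1) + 1) = p.2 - 1 :=
          Nat.log_eq_of_pow_le_of_lt_pow (by omega) (by
            have : g p.1 - p.1 < 2 ^ (p.2 - 1) := by omega
            have : 2 ^ (p.2 - 1) - 1 + (g p.1 - p.1) + 1 < 2 * 2 ^ (p.2 - 1) := by omega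
            rw [pow_succ]; omega)
        have hlq : Nat.log 2 (2 ^ (q.2 - 1) - 1 + (g q.1 - q.1) + 1) = q.2 - 1 :=
          Nat.log_eq_of_pow_le_of_lt_pow (by omega) (by
            have : g q.1 - q.1 < 2 ^ (q.2 - 1) := by omega
            have : 2 ^ (q.2 - 1) - 1 + (g q.1 - q.1) + 1 < 2 * 2 ^ (q.2 - 1) := by omega
            rw [pow_succ]; omega)
        rw [hv] at hlp
        omega
      have hz : p.1 = q.1 := by
        rw [hi] at hv
        rw [hb] at hpg
        omega
      exact Prod.ext hz hi
  calc S.card ≤ (B ×ˢ Finset.range (k - 1)).card := hinj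
  _ = m * (k - 1) := by rw [Finset.card_product, Finset.card_range, hm]
  _ = (k - 1) * m := Nat.mul_comm _ _
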